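/- arXiv:2105.07038 — 2 statements merged into one kernel-verified Lean document; each statement's English description precedes it below -/
import Mathlib

section
/- For every complete multipartite graph G with at least two nonempty parts and every 2-coloring of the edges of G, the vertex set of G can be covered by the vertex sets of two monochromatic connected subgraphs. Equivalently, tc_2(G) ≤ 2 for every complete multipartite graph G. -/
open SimpleGraph

/-- The spanning subgraph of `G` consisting of the edges that receive color `b`
under the edge-coloring `c`. -/
def SimpleGraph.colorSubgraph {V : Type*} (G : SimpleGraph V) (c : Sym2 V → Bool) (b : Bool) :
    SimpleGraph V where
  Adj u v := G.Adj u v ∧ c s(u, v) = b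
  symm := ⟨fun u v h => ⟨h.1.symm, by rw [Sym2.eq_swap]; exact h.2⟩⟩
  loopless := ⟨fun u h => G.irrefl h.1⟩

/-- There are two monochromatic connected subgraphs, each of diameter at most `d`,
whose vertex sets together cover all of `V`. -/
def HasMonoCover {V : Type*} (G : SimpleGraph V) (c : Sym2 V → Bool) (d : ℕ) : Prop :=
  ∃ (S₁ S₂ : Set V) (b₁ b₂ : Bool),
    (SimpleGraph.induce S₁ (G.colorSubgraph c b₁)).Connected ∧
    (SimpleGraph.induce S₁ (G.colorSubgraph c b₁)).ediam ≤ (d : ℕ∞) ∧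
    (SimpleGraph.induce S₂ (G.colorSubgraph c b₂)).Connected ∧
    (SimpleGraph.induce S₂ (G.colorSubgraph c b₂)).ediam ≤ (d : ℕ∞) ∧
    S₁ ∪ S₂ = Set.univ

private lemma bool_eq_of_ne_not {x r : Bool} (h : x ≠ !r) : x = r := by
  cases x <;> cases r <;> simp_all

private lemma bool_eq_not {x r : Bool} (h : x ≠ r) : x = !r := by
  cases x <;> cases r <;> simp_all

private lemma reach_of_eq {W : Type*} (H : SimpleGraph W) {u v : W} (h : u = v) :
    H.Reachable u v := h ▸ Reachable.refl u

private lemma ind_adj {W : Type*} (H : SimpleGraph W) {S : Set W} {u v : W} (hu : u ∈ S)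
    (hv : v ∈ S) (h : H.Adj u v) : (SimpleGraph.induce S H).Adj ⟨u, hu⟩ ⟨v, hv⟩ := h

private lemma connected_of_reach {W : Type*} (H : SimpleGraph W) (S : Set W) (h₀ : W)
    (h₀S : h₀ ∈ S)
    (hreach : ∀ v (hv : v ∈ S), (SimpleGraph.induce S H).Reachable ⟨v, hv⟩ ⟨h₀, h₀S⟩) :
    (SimpleGraph.induce S H).Connected := by
  haveI : Nonempty S := ⟨⟨h₀, h₀S⟩⟩
  exact ⟨fun u v => (hreach u.1 u.2).trans (hreach v.1 v.2).symm⟩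

theorem stmt1 {ι : Type*} (V : ι → Type*) [Fintype ι] [∀ i, Fintype (V i)]
    [∀ i, Nonempty (V i)] [Nontrivial ι]
    (col : Sym2 (Σ i, V i) → Bool) :
    ∃ (S₁ S₂ : Set (Σ i, V i)) (b₁ b₂ : Bool),
      (SimpleGraph.induce S₁ ((completeMultipartiteGraph V).colorSubgraph col b₁)).Connected ∧
      (SimpleGraph.induce S₂ ((completeMultipartiteGraph V).colorSubgraph col b₂)).Connected ∧
      S₁ ∪ S₂ = Set.univ := by
  classical
  obtain ⟨i, j, hij⟩ := exists_pair_ne ι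
  set G := completeMultipartiteGraph V with hG
  let a : Σ i, V i := ⟨i, Classical.arbitrary _⟩
  let bb : Σ i, V i := ⟨j, Classical.arbitrary _⟩
  set r := col s(a, bb) with hr
  set S₁ : Set (Σ i, V i) :=
    {v | v = a ∨ (v.1 ≠ i ∧ col s(a, v) = r) ∨ (v.1 ≠ j ∧ col s(bb, v) = r)} with hS₁def
  have haS₁ : a ∈ S₁ := Or.inl rfl
  have hbbS₁ : bb ∈ S₁ := Or.inr (Or.inl ⟨hij.symm, hr.symm⟩)
  have hadj_ab : (G.colorSubgraph col r).Adj a bb := ⟨hij, hr.symm⟩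
  have hconn₁ : (SimpleGraph.induce S₁ (G.colorSubgraph col r)).Connected := by
    apply connected_of_reach _ _ a haS₁
    intro v hv
    have hmem : v = a ∨ (v.1 ≠ i ∧ col s(a, v) = r) ∨ (v.1 ≠ j ∧ col s(bb, v) = r) := hv
    rcases hmem with h | ⟨h1, h2⟩ | ⟨h1, h2⟩
    · exact reach_of_eq _ (Subtype.ext h)
    · exact (ind_adj (G.colorSubgraph col r) hv haS₁
        ⟨h1, by rw [Sym2.eq_swap]; exact h2⟩).reachable
    · exact ((ind_adj (G.colorSubgraph col r) hv hbbS₁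
        ⟨h1, by rw [Sym2.eq_swap]; exact h2⟩).reachable).trans
        (ind_adj (G.colorSubgraph col r) hbbS₁ haS₁ hadj_ab.symm).reachable
  -- facts about the uncovered set
  have hU : ∀ v ∈ S₁ᶜ, v ≠ a ∧ (v.1 ≠ i → col s(a, v) = !r) ∧ (v.1 ≠ j → col s(bb, v) = !r) := by
    intro v hvU
    have h : ¬(v = a ∨ (v.1 ≠ i ∧ col s(a, v) = r) ∨ (v.1 ≠ j ∧ col s(bb, v) = r)) := hvU
    push_neg at h
    exact ⟨h.1, fun hi => bool_eq_not (h.2.1 hi), fun hj => bool_eq_not (h.2.2 hj)⟩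
  have hcover : ∀ S₂ : Set (Σ i, V i), S₁ᶜ ⊆ S₂ → S₁ ∪ S₂ = Set.univ := by
    intro S₂ hsub
    apply Set.eq_univ_of_forall
    intro v
    by_cases h : v ∈ S₁
    · exact Or.inl h
    · exact Or.inr (hsub h)
  by_cases hA : ∃ w ∈ S₁ᶜ, w.1 ≠ i ∧ w.1 ≠ j
  · -- Case A: some uncovered vertex lies outside both special parts
    obtain ⟨w, hwU, hwi, hwj⟩ := hA
    have hw1 : col s(a, w) = !r := (hU w hwU).2.1 hwi
    have hw2 : col s(bb, w) = !r := (hU w hwU).2.2 hwj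
    set S₂ : Set (Σ i, V i) := insert a (insert bb S₁ᶜ) with hS₂def
    have haS₂ : a ∈ S₂ := Set.mem_insert _ _
    have hbbS₂ : bb ∈ S₂ := Set.mem_insert_of_mem _ (Set.mem_insert _ _)
    have hUsub : S₁ᶜ ⊆ S₂ := fun x hx => Set.mem_insert_of_mem _ (Set.mem_insert_of_mem _ hx)
    have hwS₂ : w ∈ S₂ := hUsub hwU
    have hwa : (SimpleGraph.induce S₂ (G.colorSubgraph col (!r))).Reachable
        ⟨w, hwS₂⟩ ⟨a, haS₂⟩ :=
      (ind_adj (G.colorSubgraph col (!r)) hwS₂ haS₂ ⟨hwi, by rw [Sym2.eq_swap]; exact hw1⟩).reachable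
    have hbba : (SimpleGraph.induce S₂ (G.colorSubgraph col (!r))).Reachable
        ⟨bb, hbbS₂⟩ ⟨a, haS₂⟩ :=
      ((ind_adj (G.colorSubgraph col (!r)) hbbS₂ hwS₂ ⟨fun h => hwj h.symm, hw2⟩).reachable).trans hwa
    refine ⟨S₁, S₂, r, !r, hconn₁, ?_, hcover S₂ hUsub⟩
    apply connected_of_reach _ _ a haS₂
    intro v hv
    have hmem : v = a ∨ v = bb ∨ v ∈ S₁ᶜ := hv
    rcases hmem with h | h | hvU
    · exact reach_of_eq _ (Subtype.ext h)
    · exact (reach_of_eq _ (Subtype.ext h)).trans hbba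
    · by_cases hvi : v.1 = i
      · have hvj : v.1 ≠ j := fun h => hij (hvi.symm.trans h)
        have hcb : col s(bb, v) = !r := (hU v hvU).2.2 hvj
        exact ((ind_adj (G.colorSubgraph col (!r)) hv hbbS₂ ⟨hvj, by rw [Sym2.eq_swap]; exact hcb⟩).reachable).trans hbba
      · have hca : col s(a, v) = !r := (hU v hvU).2.1 hvi
        exact (ind_adj (G.colorSubgraph col (!r)) hv haS₂ ⟨hvi, by rw [Sym2.eq_swap]; exact hca⟩).reachable
  · -- Case B: every uncovered vertex lies in part i or part j
    push_neg at hA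
    have hBall : ∀ v ∈ S₁ᶜ, v.1 = i ∨ v.1 = j := by
      intro v hv
      by_cases hvi : v.1 = i
      · exact Or.inl hvi
      · exact Or.inr (hA v hv hvi)
    by_cases hB2 : ∃ w ∈ S₁ᶜ, w.1 = j
    · by_cases hB1 : ∃ u ∈ S₁ᶜ, u.1 = i
      · obtain ⟨u, huU, hui⟩ := hB1
        obtain ⟨w, hwU, hwj⟩ := hB2
        by_cases hC : ∃ u' ∈ S₁ᶜ, ∃ w' ∈ S₁ᶜ, u'.1 = i ∧ w'.1 = j ∧ col s(u', w') = !r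
        · -- there is a cross edge of color !r
          obtain ⟨u', hu'U, w', hw'U, hu'i, hw'j, hcross⟩ := hC
          set S₂ : Set (Σ i, V i) := insert a (insert bb S₁ᶜ) with hS₂def
          have haS₂ : a ∈ S₂ := Set.mem_insert _ _
          have hbbS₂ : bb ∈ S₂ := Set.mem_insert_of_mem _ (Set.mem_insert _ _)
          have hUsub : S₁ᶜ ⊆ S₂ := fun x hx =>
            Set.mem_insert_of_mem _ (Set.mem_insert_of_mem _ hx)
          have hu'S₂ : u' ∈ S₂ := hUsub hu'U
          have hw'S₂ : w' ∈ S₂ := hUsub hw'U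
          have hu'j : u'.1 ≠ j := fun h => hij (hu'i.symm.trans h)
          have hw'i : w'.1 ≠ i := fun h => hij (h.symm.trans hw'j)
          have hw'a : (SimpleGraph.induce S₂ (G.colorSubgraph col (!r))).Reachable
              ⟨w', hw'S₂⟩ ⟨a, haS₂⟩ :=
            (ind_adj (G.colorSubgraph col (!r)) hw'S₂ haS₂
              ⟨hw'i, by rw [Sym2.eq_swap]; exact (hU w' hw'U).2.1 hw'i⟩).reachable
          have hbba : (SimpleGraph.induce S₂ (G.colorSubgraph col (!r))).Reachable
              ⟨bb, hbbS₂⟩ ⟨a, haS₂⟩ :=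
            (ind_adj (G.colorSubgraph col (!r)) hbbS₂ hu'S₂
                ⟨fun h => hu'j h.symm, (hU u' hu'U).2.2 hu'j⟩).reachable.trans
              ((ind_adj (G.colorSubgraph col (!r)) hu'S₂ hw'S₂
                ⟨fun h => hij ((hu'i.symm.trans h).trans hw'j), hcross⟩).reachable.trans hw'a)
          refine ⟨S₁, S₂, r, !r, hconn₁, ?_, hcover S₂ hUsub⟩
          apply connected_of_reach _ _ a haS₂
          intro v hv
          have hmem : v = a ∨ v = bb ∨ v ∈ S₁ᶜ := hv
          rcases hmem with h | h | hvU
          · exact reach_of_eq _ (Subtype.ext h)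
          · exact (reach_of_eq _ (Subtype.ext h)).trans hbba
          · by_cases hvi : v.1 = i
            · have hvj : v.1 ≠ j := fun h => hij (hvi.symm.trans h)
              have hcb : col s(bb, v) = !r := (hU v hvU).2.2 hvj
              exact ((ind_adj (G.colorSubgraph col (!r)) hv hbbS₂
                ⟨hvj, by rw [Sym2.eq_swap]; exact hcb⟩).reachable).trans hbba
            · have hca : col s(a, v) = !r := (hU v hvU).2.1 hvi
              exact (ind_adj (G.colorSubgraph col (!r)) hv haS₂ ⟨hvi, by rw [Sym2.eq_swap]; exact hca⟩).reachable
        · -- all cross edges between the two uncovered sides have color r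
          push_neg at hC
          have hall : ∀ x ∈ S₁ᶜ, ∀ y ∈ S₁ᶜ, x.1 = i → y.1 = j → col s(x, y) = r := by
            intro x hx y hy hxi hyj
            exact bool_eq_of_ne_not (hC x hx y hy hxi hyj)
          refine ⟨S₁, S₁ᶜ, r, r, hconn₁, ?_, hcover _ subset_rfl⟩
          apply connected_of_reach _ _ u huU
          intro v hv
          rcases hBall v hv with hvi | hvj
          · -- v in part i : go v – w – u
            have h1 : (SimpleGraph.induce S₁ᶜ (G.colorSubgraph col r)).Adj ⟨v, hv⟩ ⟨w, hwU⟩ :=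
              ind_adj (G.colorSubgraph col r) hv hwU
                ⟨fun h => hij ((hvi.symm.trans h).trans hwj), hall v hv w hwU hvi hwj⟩
            have h2 : (SimpleGraph.induce S₁ᶜ (G.colorSubgraph col r)).Adj ⟨w, hwU⟩ ⟨u, huU⟩ :=
              ind_adj (G.colorSubgraph col r) hwU huU
                ⟨fun h => hij ((hui.symm.trans h.symm).trans hwj),
                 by rw [Sym2.eq_swap]; exact hall u huU w hwU hui hwj⟩
            exact h1.reachable.trans h2.reachable
          · have h1 : (SimpleGraph.induce S₁ᶜ (G.colorSubgraph col r)).Adj ⟨v, hv⟩ ⟨u, huU⟩ :=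
              ind_adj (G.colorSubgraph col r) hv huU
                ⟨fun h => hij ((hui.symm.trans h.symm).trans hvj),
                 by rw [Sym2.eq_swap]; exact hall u huU v hv hui hvj⟩
            exact h1.reachable
      · -- no uncovered vertex in part i : blue star at a? no, star at a with color !r
        push_neg at hB1
        set S₂ : Set (Σ i, V i) := insert a S₁ᶜ with hS₂def
        have haS₂ : a ∈ S₂ := Set.mem_insert _ _
        have hUsub : S₁ᶜ ⊆ S₂ := fun x hx => Set.mem_insert_of_mem _ hx
        refine ⟨S₁, S₂, r, !r, hconn₁, ?_, hcover S₂ hUsub⟩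
        apply connected_of_reach _ _ a haS₂
        intro v hv
        have hmem : v = a ∨ v ∈ S₁ᶜ := hv
        rcases hmem with h | hvU
        · exact reach_of_eq _ (Subtype.ext h)
        · have hvi : v.1 ≠ i := hB1 v hvU
          have hca : col s(a, v) = !r := (hU v hvU).2.1 hvi
          exact (ind_adj (G.colorSubgraph col (!r)) hv haS₂ ⟨hvi, by rw [Sym2.eq_swap]; exact hca⟩).reachable
    · -- no uncovered vertex in part j : star at bb with color !r
      push_neg at hB2
      set S₂ : Set (Σ i, V i) := insert bb S₁ᶜ with hS₂def
      have hbbS₂ : bb ∈ S₂ := Set.mem_insert _ _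
      have hUsub : S₁ᶜ ⊆ S₂ := fun x hx => Set.mem_insert_of_mem _ hx
      refine ⟨S₁, S₂, r, !r, hconn₁, ?_, hcover S₂ hUsub⟩
      apply connected_of_reach _ _ bb hbbS₂
      intro v hv
      have hmem : v = bb ∨ v ∈ S₁ᶜ := hv
      rcases hmem with h | hvU
      · exact reach_of_eq _ (Subtype.ext h)
      · have hvj : v.1 ≠ j := hB2 v hvU
        have hcb : col s(bb, v) = !r := (hU v hvU).2.2 hvj
        exact (ind_adj (G.colorSubgraph col (!r)) hv hbbS₂ ⟨hvj, by rw [Sym2.eq_swap]; exact hcb⟩).reachable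
end

section
/- Fix an integer r ≥ 2. Suppose that every finite r-partite hypergraph H satisfies τ(H) ≤ (r−1)·ν(H). Then for every finite simple graph G and every r-coloring of the edges of G, the vertex set of G can be covered by the vertex sets of at most (r−1)·α(G) monochromatic connected subgraphs; that is, tc_r(G) ≤ (r−1)·α(G). -/
open SimpleGraph

/-- `S` is a vertex cover of the hypergraph with edge set `E`: it meets every edge. -/
def IsHypVertexCover {W : Type*} (E : Finset (Finset W)) (S : Finset W) : Prop :=
  ∀ e ∈ E, ∃ v ∈ S, v ∈ e

/-- The vertex cover number `τ` of the hypergraph with edge set `E`: the least size of a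
vertex cover. -/
noncomputable def hypTau {W : Type*} (E : Finset (Finset W)) : ℕ :=
  sInf {n | ∃ S : Finset W, IsHypVertexCover E S ∧ S.card = n}

/-- The matching number `ν` of the hypergraph with edge set `E`: the greatest size of a
set of pairwise disjoint edges. -/
noncomputable def hypNu {W : Type*} (E : Finset (Finset W)) : ℕ :=
  sSup {n | ∃ M : Finset (Finset W), M ⊆ E ∧
    (∀ e ∈ M, ∀ f ∈ M, e ≠ f → Disjoint e f) ∧ M.card = n}

/-- The hypergraph with edge set `E` is `r`-partite: the vertices can be partitioned into
`r` classes such that no edge contains two distinct vertices of the same class. -/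
def IsHypRPartite {W : Type*} (r : ℕ) (E : Finset (Finset W)) : Prop :=
  ∃ p : W → Fin r, ∀ e ∈ E, ∀ u ∈ e, ∀ v ∈ e, u ≠ v → p u ≠ p v

/-- The spanning subgraph of `G` consisting of the edges that receive color `b`
under the edge-coloring `c` with `r` colors. -/
def SimpleGraph.monoSubgraph {V : Type*} {r : ℕ} (G : SimpleGraph V) (c : Sym2 V → Fin r)
    (b : Fin r) : SimpleGraph V where
  Adj u v := G.Adj u v ∧ c s(u, v) = b
  symm := ⟨fun u v h => ⟨h.1.symm, by rw [Sym2.eq_swap]; exact h.2⟩⟩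
  loopless := ⟨fun u h => G.irrefl h.1⟩

/-- The independence number `α` of a graph: the greatest size of a set of pairwise
non-adjacent vertices. -/
noncomputable def indepNum {V : Type*} (G : SimpleGraph V) : ℕ :=
  sSup {n | ∃ S : Finset V, (∀ u ∈ S, ∀ v ∈ S, ¬ G.Adj u v) ∧ S.card = n}

/-- The vertex set of `G` can be covered by at most `t` monochromatic connected subgraphs
with respect to the `r`-coloring `c`. -/
def HasTreeCover {V : Type*} {r : ℕ} (G : SimpleGraph V) (c : Sym2 V → Fin r) (t : ℕ) : Prop :=
  ∃ (m : ℕ) (S : Fin m → Set V) (b : Fin m → Fin r), m ≤ t ∧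
    (∀ i, (SimpleGraph.induce (S i) (G.monoSubgraph c (b i))).Connected) ∧
    (⋃ i, S i) = Set.univ

lemma aux_supp_connected {V : Type} (K : SimpleGraph V) (C : K.ConnectedComponent) :
    (K.induce C.supp).Connected := by
  classical
  rw [connected_induce_iff, Subgraph.connected_iff_forall_exists_walk_subgraph]
  constructor
  · obtain ⟨v, hv⟩ := C.exists_rep
    exact ⟨v, by show v ∈ C.supp; exact hv⟩
  · intro u v hu hv
    simp only [Subgraph.induce_verts, Subgraph.verts_top,
      ConnectedComponent.mem_supp_iff] at hu hv
    have hreach : K.Reachable u v := ConnectedComponent.exact (hu.trans hv.symm)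
    obtain ⟨p⟩ := hreach
    refine ⟨p, le_trans p.toSubgraph_le_induce_support ?_⟩
    apply Subgraph.induce_mono_right
    intro z hz
    have : K.Reachable u z := (p.takeUntil z hz).reachable
    simp only [ConnectedComponent.mem_supp_iff]
    rw [← hu]
    exact (ConnectedComponent.sound this.symm)

theorem stmt13 (r : ℕ) (hr : 2 ≤ r)
    (ryser : ∀ (W : Type) [Fintype W] [DecidableEq W] (E : Finset (Finset W)),
      (∀ e ∈ E, e.Nonempty) → IsHypRPartite r E → hypTau E ≤ (r - 1) * hypNu E) :
    ∀ (V : Type) [Fintype V] (G : SimpleGraph V) (c : Sym2 V → Fin r),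
      HasTreeCover G c ((r - 1) * _root_.indepNum G) := by
  intro V _ G c
  classical
  have hrpos : 0 < r := by omega
  set H : Fin r → SimpleGraph V := fun b => G.monoSubgraph c b with hH
  let W : Type := Σ b : Fin r, (H b).ConnectedComponent
  haveI : Fintype W := Fintype.ofFinite W
  let edge : V → Finset W :=
    fun v => Finset.univ.image (fun b => ⟨b, (H b).connectedComponentMk v⟩)
  let E : Finset (Finset W) := Finset.univ.image edge
  have hmem_edge : ∀ (v : V) (w : W),
      w ∈ edge v ↔ w.2 = (H w.1).connectedComponentMk v := by
    intro v w
    simp only [edge, Finset.mem_image, Finset.mem_univ, true_and]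
    constructor
    · rintro ⟨b, rfl⟩; rfl
    · intro h; exact ⟨w.1, by cases w; simp_all⟩
  have hE_ne : ∀ e ∈ E, e.Nonempty := by
    intro e he
    simp only [E, Finset.mem_image, Finset.mem_univ, true_and] at he
    obtain ⟨v, rfl⟩ := he
    exact ⟨Sigma.mk (⟨0, hrpos⟩ : Fin r) ((H ⟨0, hrpos⟩).connectedComponentMk v),
      by rw [hmem_edge]⟩
  have hpart : IsHypRPartite r E := by
    refine ⟨Sigma.fst, ?_⟩
    intro e he u hu v hv huv
    simp only [E, Finset.mem_image, Finset.mem_univ, true_and] at he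
    obtain ⟨x, rfl⟩ := he
    rw [hmem_edge] at hu hv
    intro hfst
    apply huv
    cases u; cases v
    cases hfst
    simp_all
  -- matching number ≤ independence number
  have hnu : hypNu E ≤ _root_.indepNum G := by
    have hset_ne : {n | ∃ M : Finset (Finset W), M ⊆ E ∧
        (∀ e ∈ M, ∀ f ∈ M, e ≠ f → Disjoint e f) ∧ M.card = n}.Nonempty :=
      ⟨0, ∅, Finset.empty_subset _, by simp, rfl⟩
    apply csSup_le hset_ne
    rintro n ⟨M, hME, hdisj, rfl⟩
    rcases M.eq_empty_or_nonempty with rfl | ⟨f0, hf0⟩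
    · simp
    -- choose representatives
    have hrep : ∀ f ∈ M, ∃ v : V, edge v = f := by
      intro f hf
      have := hME hf
      simp only [E, Finset.mem_image, Finset.mem_univ, true_and] at this
      exact this
    choose g hg using hrep
    -- build the independent set using attach
    let S : Finset V := M.attach.image (fun f => g f.1 f.2)
    have hcard : S.card = M.card := by
      rw [Finset.card_image_of_injective _ ?_, Finset.card_attach]
      intro a b hab
      have hab' : g a.1 a.2 = g b.1 b.2 := hab
      have : edge (g a.1 a.2) = edge (g b.1 b.2) := by rw [hab']
      rw [hg a.1 a.2, hg b.1 b.2] at this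
      exact Subtype.ext this
    have hindep : ∀ u ∈ S, ∀ v ∈ S, ¬ G.Adj u v := by
      intro u hu v hv hadj
      simp only [S, Finset.mem_image, Finset.mem_attach, true_and] at hu hv
      obtain ⟨⟨f, hf⟩, rfl⟩ := hu
      obtain ⟨⟨f', hf'⟩, rfl⟩ := hv
      set u := g f hf
      set v := g f' hf'
      have hne : f ≠ f' := by
        rintro rfl
        exact G.irrefl hadj
      have hd := hdisj f hf f' hf' hne
      set b := c s(u, v)
      have hadjb : (H b).Adj u v := And.intro hadj rfl
      have hcc : (H b).connectedComponentMk u = (H b).connectedComponentMk v :=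
        ConnectedComponent.sound hadjb.reachable
      have h1 : (⟨b, (H b).connectedComponentMk u⟩ : W) ∈ f := by
        rw [← hg f hf, hmem_edge]
      have h2 : (⟨b, (H b).connectedComponentMk u⟩ : W) ∈ f' := by
        rw [← hg f' hf', hmem_edge]; exact hcc
      exact (Finset.disjoint_left.mp hd h1) h2
    apply le_csSup
    · exact ⟨Fintype.card V, by rintro n ⟨T, _, rfl⟩; exact T.card_le_univ⟩
    · exact ⟨S, hindep, hcard⟩
  have hryser := ryser W E hE_ne hpart
  -- extract a minimum cover
  have hne : {n | ∃ S : Finset W, IsHypVertexCover E S ∧ S.card = n}.Nonempty := by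
    refine ⟨(Finset.univ : Finset W).card, Finset.univ, ?_, rfl⟩
    intro e he
    obtain ⟨w, hw⟩ := hE_ne e he
    exact ⟨w, Finset.mem_univ w, hw⟩
  obtain ⟨S₀, hS₀cov, hS₀card⟩ := Nat.sInf_mem hne
  have hbound : S₀.card ≤ (r - 1) * _root_.indepNum G := by
    calc S₀.card = hypTau E := hS₀card
      _ ≤ (r - 1) * hypNu E := hryser
      _ ≤ (r - 1) * _root_.indepNum G := Nat.mul_le_mul_left _ hnu
  -- build the tree cover
  refine ⟨S₀.card, fun i => ((S₀.equivFin.symm i : W).2.supp : Set V),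
    fun i => (S₀.equivFin.symm i : W).1, hbound, ?_, ?_⟩
  · intro i
    exact aux_supp_connected (H _) _
  · apply Set.eq_univ_iff_forall.mpr
    intro v
    have hvE : edge v ∈ E := by
      simp only [E, Finset.mem_image, Finset.mem_univ, true_and]
      exact ⟨v, rfl⟩
    obtain ⟨w, hwS, hwe⟩ := hS₀cov (edge v) hvE
    rw [hmem_edge] at hwe
    refine Set.mem_iUnion.mpr ⟨S₀.equivFin ⟨w, hwS⟩, ?_⟩
    rw [Equiv.symm_apply_apply]
    rw [ConnectedComponent.mem_supp_iff]
    exact hwe.symm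
end
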